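/- If R ⊆ S^{q−1} is geodesically connected in the chord sense, then the cone C = {r·ρ : r ∈ [0, ∞), ρ ∈ R} generated by R is a convex subset of ℝ^q; if moreover R is closed, then C is closed. -/

import Mathlib

/-- If `R ⊆ S^{q−1}` is geodesically connected in the chord sense, then the cone
`C = {r·ρ : r ≥ 0, ρ ∈ R}` generated by `R` is convex; if moreover `R` is closed,
then `C` is closed. -/
theorem cone_of_geodesically_connected_convex_and_closed
    (q : ℕ) (hq : 1 ≤ q)
    (R : Set (EuclideanSpace ℝ (Fin q)))
    (hRsub : R ⊆ Metric.sphere (0 : EuclideanSpace ℝ (Fin q)) 1)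
    (hRgeo : ∀ u ∈ R, ∀ v ∈ R, ∀ α ∈ Set.Icc (0 : ℝ) 1,
      α • u + (1 - α) • v ≠ 0 →
        ‖α • u + (1 - α) • v‖⁻¹ • (α • u + (1 - α) • v) ∈ R) :
    Convex ℝ {x : EuclideanSpace ℝ (Fin q) | ∃ r : ℝ, 0 ≤ r ∧ ∃ ρ ∈ R, x = r • ρ} ∧
    (IsClosed R →
      IsClosed {x : EuclideanSpace ℝ (Fin q) | ∃ r : ℝ, 0 ≤ r ∧ ∃ ρ ∈ R, x = r • ρ}) := by
  constructor
  · intro x hx y hy a b ha hb hab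
    obtain ⟨r, hr, ρ, hρ, rfl⟩ := hx
    obtain ⟨s, hs, σ, hσ, rfl⟩ := hy
    have ha' : (0:ℝ) ≤ a * r := mul_nonneg ha hr
    have hb' : (0:ℝ) ≤ b * s := mul_nonneg hb hs
    have key : a • (r • ρ) + b • (s • σ) = (a*r) • ρ + (b*s) • σ := by
      simp [smul_smul]
    rw [Set.mem_setOf_eq, key]
    set a' := a * r with ha'def
    set b' := b * s with hb'def
    by_cases hz : a' + b' = 0
    · have ha0 : a' = 0 := le_antisymm (by linarith) ha'
      have hb0 : b' = 0 := by linarith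
      exact ⟨0, le_refl 0, ρ, hρ, by simp [ha0, hb0]⟩
    · have hsum : 0 < a' + b' := lt_of_le_of_ne (by positivity) (Ne.symm hz)
      set α := a' / (a' + b') with hαdef
      have hα : α ∈ Set.Icc (0:ℝ) 1 :=
        ⟨div_nonneg ha' hsum.le, div_le_one_of_le₀ (by linarith) hsum.le⟩
      set w := α • ρ + (1 - α) • σ with hw
      have hws : (a' + b') • w = a' • ρ + b' • σ := by
        have h1 : (a' + b') * α = a' := by rw [hαdef]; field_simp
        have h2 : (a' + b') * (1 - α) = b' := by
          have : (1 : ℝ) - α = b' / (a' + b') := by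
            rw [hαdef, eq_div_iff hz, sub_mul, div_mul_cancel₀ _ hz]; ring
          rw [this]; field_simp
        rw [hw, smul_add, smul_smul, smul_smul, h1, h2]
      by_cases hw0 : w = 0
      · refine ⟨0, le_refl 0, ρ, hρ, ?_⟩
        rw [← hws, hw0, smul_zero, zero_smul]
      · have hmem := hRgeo ρ hρ σ hσ α hα hw0
        refine ⟨(a' + b') * ‖w‖, by positivity, _, hmem, ?_⟩
        have hwn : ‖w‖ ≠ 0 := norm_ne_zero_iff.mpr hw0
        have : ((a' + b') * ‖w‖) • (‖α • ρ + (1 - α) • σ‖⁻¹ • (α • ρ + (1 - α) • σ))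
            = (a' + b') • w := by
          rw [smul_smul, ← hw, mul_assoc, mul_inv_cancel₀ hwn, mul_one]
        rw [this, hws]
  · intro hRc
    apply IsSeqClosed.isClosed
    intro xn x hxn hlim
    choose r hr ρ hρ hx using hxn
    have hnorm : ∀ n, ‖xn n‖ = r n := by
      intro n
      have hρn : ‖ρ n‖ = 1 := by
        have := hRsub (hρ n)
        simpa [mem_sphere_iff_norm] using this
      rw [hx n, norm_smul, hρn, mul_one, Real.norm_eq_abs, abs_of_nonneg (hr n)]
    have hrlim : Filter.Tendsto r Filter.atTop (nhds ‖x‖) := by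
      have := hlim.norm
      simpa [hnorm] using this
    by_cases hx0 : x = 0
    · exact ⟨0, le_refl 0, ρ 0, hρ 0, by simp [hx0]⟩
    · have hxpos : 0 < ‖x‖ := norm_pos_iff.mpr hx0
      have hρlim : Filter.Tendsto (fun n => (r n)⁻¹ • xn n) Filter.atTop
          (nhds (‖x‖⁻¹ • x)) := (hrlim.inv₀ hxpos.ne').smul hlim
      have hev : ∀ᶠ n in Filter.atTop, (r n)⁻¹ • xn n ∈ R := by
        filter_upwards [hrlim.eventually (eventually_gt_nhds hxpos)] with n hn
        rw [hx n, smul_smul, inv_mul_cancel₀ hn.ne', one_smul]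
        exact hρ n
      have hmem : ‖x‖⁻¹ • x ∈ R := hRc.mem_of_tendsto hρlim hev
      exact ⟨‖x‖, hxpos.le, _, hmem, (smul_inv_smul₀ hxpos.ne' x).symm⟩
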